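/- Let A be an entrywise nonnegative n×n matrix. Then the function α ↦ ‖S_α(A)‖ (ℓ²→ℓ² operator norm of the weighted geometric symmetrization S_α(A) with entries a_{ij}^α a_{ji}^{1−α}) is monotonically decreasing on [0, 1/2] and monotonically increasing on [1/2, 1]. In particular, ‖S_α(A)‖ ≥ ‖S_{1/2}(A)‖ for all α ∈ [0,1]. -/

import Mathlib

open Matrix

/-- The ℓ² → ℓ² operator norm of a real `n × n` matrix. -/
noncomputable def opNorm {n : ℕ} (A : Matrix (Fin n) (Fin n) ℝ) : ℝ :=
  ‖LinearMap.toContinuousLinearMap (Matrix.toEuclideanLin A)‖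

/-- The weighted geometric symmetrization `S_α(A)` with entries `a_{ij}^α a_{ji}^{1-α}`. -/
noncomputable def wgs {n : ℕ} (α : ℝ) (A : Matrix (Fin n) (Fin n) ℝ) :
    Matrix (Fin n) (Fin n) ℝ :=
  Matrix.of fun i j => A i j ^ α * A j i ^ (1 - α)

lemma inner_toEuclideanLin {n : ℕ} (A : Matrix (Fin n) (Fin n) ℝ)
    (x y : EuclideanSpace ℝ (Fin n)) :
    inner ℝ x (Matrix.toEuclideanLin A y) = ∑ i, ∑ j, x i * (A i j * y j) := by
  simp [Matrix.toEuclideanLin_apply, PiLp.inner_apply, Matrix.mulVec, dotProduct,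
    Finset.mul_sum, RCLike.inner_apply]
  refine Finset.sum_congr rfl fun i _ => ?_
  rw [Finset.sum_mul]
  exact Finset.sum_congr rfl fun j _ => by ring

lemma inner_le_opNorm {n : ℕ} (A : Matrix (Fin n) (Fin n) ℝ)
    (x y : EuclideanSpace ℝ (Fin n)) :
    inner ℝ x (Matrix.toEuclideanLin A y) ≤ opNorm A * ‖x‖ * ‖y‖ := by
  calc (inner ℝ x (Matrix.toEuclideanLin A y) : ℝ)
      ≤ ‖x‖ * ‖Matrix.toEuclideanLin A y‖ := real_inner_le_norm _ _
    _ ≤ ‖x‖ * (opNorm A * ‖y‖) := by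
        have h := (LinearMap.toContinuousLinearMap (Matrix.toEuclideanLin A)).le_opNorm y
        have hx : (0:ℝ) ≤ ‖x‖ := norm_nonneg _
        exact mul_le_mul_of_nonneg_left h hx
    _ = opNorm A * ‖x‖ * ‖y‖ := by ring

lemma opNorm_le_of_inner {n : ℕ} (A : Matrix (Fin n) (Fin n) ℝ) {K : ℝ} (hK : 0 ≤ K)
    (h : ∀ x y : EuclideanSpace ℝ (Fin n),
      inner ℝ x (Matrix.toEuclideanLin A y) ≤ K * ‖x‖ * ‖y‖) :
    opNorm A ≤ K := by
  apply ContinuousLinearMap.opNorm_le_bound _ hK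
  intro y
  set v : EuclideanSpace ℝ (Fin n) := Matrix.toEuclideanLin A y with hv
  have hvy : (LinearMap.toContinuousLinearMap (Matrix.toEuclideanLin A)) y = v := rfl
  rw [hvy]
  have h2 : ‖v‖ ^ 2 ≤ K * ‖v‖ * ‖y‖ := by
    have := h v y
    rwa [real_inner_self_eq_norm_sq] at this
  rcases eq_or_lt_of_le (norm_nonneg v) with h0 | h0
  · rw [← h0]; positivity
  · have : ‖v‖ * ‖v‖ ≤ (K * ‖y‖) * ‖v‖ := by nlinarith
    exact le_of_mul_le_mul_right (by nlinarith) h0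

lemma opNorm_transpose {n : ℕ} (A : Matrix (Fin n) (Fin n) ℝ) :
    opNorm Aᵀ = opNorm A := by
  have key : ∀ B : Matrix (Fin n) (Fin n) ℝ, opNorm Bᵀ ≤ opNorm B := by
    intro B
    apply opNorm_le_of_inner _ (norm_nonneg _)
    intro x y
    rw [inner_toEuclideanLin]
    have hswap : ∑ i, ∑ j, x i * (Bᵀ i j * y j)
        = (inner ℝ y (Matrix.toEuclideanLin B x) : ℝ) := by
      rw [inner_toEuclideanLin, Finset.sum_comm]
      apply Finset.sum_congr rfl; intro j _
      apply Finset.sum_congr rfl; intro i _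
      simp only [Matrix.transpose_apply]; ring
    rw [hswap]
    calc (inner ℝ y (Matrix.toEuclideanLin B x) : ℝ)
        ≤ opNorm B * ‖y‖ * ‖x‖ := inner_le_opNorm B y x
      _ = opNorm B * ‖x‖ * ‖y‖ := by ring
  exact le_antisymm (key A) (by simpa using key Aᵀ)

lemma norm_abs_euclidean {n : ℕ} (x : EuclideanSpace ℝ (Fin n)) :
    ‖((WithLp.equiv 2 (Fin n → ℝ)).symm fun i => |x i|)‖ = ‖x‖ := by
  rw [EuclideanSpace.norm_eq, EuclideanSpace.norm_eq]
  congr 1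
  apply Finset.sum_congr rfl
  intro i _
  simp [Real.norm_eq_abs, abs_abs]

/-- Core lemma: entrywise weighted geometric mean bound for the operator norm. -/
lemma core_lemma {n : ℕ} (B C : Matrix (Fin n) (Fin n) ℝ)
    (hB : ∀ i j, 0 ≤ B i j) (hC : ∀ i j, 0 ≤ C i j) {t : ℝ} (ht0 : 0 < t) (ht1 : t < 1) :
    opNorm (Matrix.of fun i j => B i j ^ t * C i j ^ (1 - t)) ≤
      opNorm B ^ t * opNorm C ^ (1 - t) := by
  have hB0 : (0:ℝ) ≤ opNorm B := norm_nonneg _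
  have hC0 : (0:ℝ) ≤ opNorm C := norm_nonneg _
  have ht1' : (0:ℝ) < 1 - t := by linarith
  apply opNorm_le_of_inner _ (by positivity)
  intro x y
  set ax : EuclideanSpace ℝ (Fin n) := (WithLp.equiv 2 (Fin n → ℝ)).symm fun i => |x i| with haxd
  set ay : EuclideanSpace ℝ (Fin n) := (WithLp.equiv 2 (Fin n → ℝ)).symm fun i => |y i| with hayd
  have haxn : ‖ax‖ = ‖x‖ := norm_abs_euclidean x
  have hayn : ‖ay‖ = ‖y‖ := norm_abs_euclidean y
  set u : Fin n × Fin n → ℝ := fun p => |x p.1| * (B p.1 p.2 * |y p.2|) with hu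
  set v : Fin n × Fin n → ℝ := fun p => |x p.1| * (C p.1 p.2 * |y p.2|) with hv
  have hun : ∀ p, 0 ≤ u p := fun p => by
    have := hB p.1 p.2; have := abs_nonneg (x p.1); have := abs_nonneg (y p.2); positivity
  have hvn : ∀ p, 0 ≤ v p := fun p => by
    have := hC p.1 p.2; have := abs_nonneg (x p.1); have := abs_nonneg (y p.2); positivity
  have hsu : 0 ≤ ∑ p : Fin n × Fin n, u p := Finset.sum_nonneg fun p _ => hun p
  have hsv : 0 ≤ ∑ p : Fin n × Fin n, v p := Finset.sum_nonneg fun p _ => hvn p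
  have hpq : Real.HolderConjugate (1/t) (1/(1-t)) := by
    rw [Real.holderConjugate_iff]
    constructor
    · exact one_lt_one_div ht0 ht1
    · rw [one_div, one_div, inv_inv, inv_inv]; ring
  -- step 1 : inner ≤ sum of geometric means
  have step1 : inner ℝ x (Matrix.toEuclideanLin (Matrix.of fun i j => B i j ^ t * C i j ^ (1 - t)) y)
      ≤ ∑ p : Fin n × Fin n, (u p) ^ t * (v p) ^ (1 - t) := by
    rw [inner_toEuclideanLin, ← Finset.sum_product']
    apply Finset.sum_le_sum
    rintro ⟨i, j⟩ _
    have habs : x i * ((Matrix.of fun i j => B i j ^ t * C i j ^ (1 - t)) i j * y j)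
        ≤ |x i| * ((B i j ^ t * C i j ^ (1 - t)) * |y j|) := by
      calc x i * ((Matrix.of fun i j => B i j ^ t * C i j ^ (1 - t)) i j * y j)
          ≤ |x i * ((B i j ^ t * C i j ^ (1 - t)) * y j)| := le_abs_self _
        _ = |x i| * ((B i j ^ t * C i j ^ (1 - t)) * |y j|) := by
            rw [abs_mul, abs_mul]
            congr 2
            exact abs_of_nonneg
              (mul_nonneg (Real.rpow_nonneg (hB i j) _) (Real.rpow_nonneg (hC i j) _))
    refine habs.trans (le_of_eq ?_)
    have hx1 : |x i| ^ t * |x i| ^ (1 - t) = |x i| := by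
      rw [← Real.rpow_add_of_nonneg (abs_nonneg _) ht0.le ht1'.le]; simp
    have hy1 : |y j| ^ t * |y j| ^ (1 - t) = |y j| := by
      rw [← Real.rpow_add_of_nonneg (abs_nonneg _) ht0.le ht1'.le]; simp
    have expand : (u (i, j)) ^ t * (v (i, j)) ^ (1 - t) =
        (|x i| ^ t * |x i| ^ (1 - t)) *
          ((B i j ^ t * C i j ^ (1 - t)) * (|y j| ^ t * |y j| ^ (1 - t))) := by
      rw [hu, hv]
      simp only
      rw [Real.mul_rpow (abs_nonneg _) (mul_nonneg (hB i j) (abs_nonneg _)),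
        Real.mul_rpow (abs_nonneg _) (mul_nonneg (hC i j) (abs_nonneg _)),
        Real.mul_rpow (hB i j) (abs_nonneg _), Real.mul_rpow (hC i j) (abs_nonneg _)]
      ring
    rw [expand, hx1, hy1]
  -- step 2 : Hölder
  have step2 : ∑ p : Fin n × Fin n, (u p) ^ t * (v p) ^ (1 - t)
      ≤ (∑ p : Fin n × Fin n, u p) ^ t * (∑ p : Fin n × Fin n, v p) ^ (1 - t) := by
    have H := Real.inner_le_Lp_mul_Lq_of_nonneg (s := Finset.univ) hpq
      (f := fun p => (u p) ^ t) (g := fun p => (v p) ^ (1 - t))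
      (fun p _ => Real.rpow_nonneg (hun p) _) (fun p _ => Real.rpow_nonneg (hvn p) _)
    have e1 : ∀ p : Fin n × Fin n, ((u p) ^ t) ^ (1/t) = u p := by
      intro p
      rw [← Real.rpow_mul (hun p), mul_one_div_cancel ht0.ne', Real.rpow_one]
    have e2 : ∀ p : Fin n × Fin n, ((v p) ^ (1 - t)) ^ (1/(1-t)) = v p := by
      intro p
      rw [← Real.rpow_mul (hvn p), mul_one_div_cancel ht1'.ne', Real.rpow_one]
    simp only [e1, e2, one_div_one_div] at H
    exact H
  -- step 3 : bound the two sums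
  have sumu : ∑ p : Fin n × Fin n, u p ≤ opNorm B * ‖x‖ * ‖y‖ := by
    have : ∑ p : Fin n × Fin n, u p
        = (inner ℝ ax (Matrix.toEuclideanLin B ay) : ℝ) := by
      rw [inner_toEuclideanLin, ← Finset.sum_product']
      rfl
    rw [this]
    calc (inner ℝ ax (Matrix.toEuclideanLin B ay) : ℝ)
        ≤ opNorm B * ‖ax‖ * ‖ay‖ := inner_le_opNorm B ax ay
      _ = opNorm B * ‖x‖ * ‖y‖ := by rw [haxn, hayn]
  have sumv : ∑ p : Fin n × Fin n, v p ≤ opNorm C * ‖x‖ * ‖y‖ := by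
    have : ∑ p : Fin n × Fin n, v p
        = (inner ℝ ax (Matrix.toEuclideanLin C ay) : ℝ) := by
      rw [inner_toEuclideanLin, ← Finset.sum_product']
      rfl
    rw [this]
    calc (inner ℝ ax (Matrix.toEuclideanLin C ay) : ℝ)
        ≤ opNorm C * ‖ax‖ * ‖ay‖ := inner_le_opNorm C ax ay
      _ = opNorm C * ‖x‖ * ‖y‖ := by rw [haxn, hayn]
  -- step 4 : combine
  have hxn : (0:ℝ) ≤ ‖x‖ := norm_nonneg _
  have hyn : (0:ℝ) ≤ ‖y‖ := norm_nonneg _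
  have step4 : (∑ p : Fin n × Fin n, u p) ^ t * (∑ p : Fin n × Fin n, v p) ^ (1 - t)
      ≤ opNorm B ^ t * opNorm C ^ (1 - t) * ‖x‖ * ‖y‖ := by
    have b1 : (∑ p : Fin n × Fin n, u p) ^ t ≤ (opNorm B * ‖x‖ * ‖y‖) ^ t :=
      Real.rpow_le_rpow hsu sumu ht0.le
    have b2 : (∑ p : Fin n × Fin n, v p) ^ (1 - t) ≤ (opNorm C * ‖x‖ * ‖y‖) ^ (1 - t) :=
      Real.rpow_le_rpow hsv sumv ht1'.le
    have b3 : (∑ p : Fin n × Fin n, u p) ^ t * (∑ p : Fin n × Fin n, v p) ^ (1 - t)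
        ≤ (opNorm B * ‖x‖ * ‖y‖) ^ t * (opNorm C * ‖x‖ * ‖y‖) ^ (1 - t) :=
      mul_le_mul b1 b2 (Real.rpow_nonneg hsv _) (Real.rpow_nonneg (by positivity) _)
    refine b3.trans (le_of_eq ?_)
    rw [Real.mul_rpow (by positivity) hyn, Real.mul_rpow hB0 hxn,
      Real.mul_rpow (by positivity) hyn, Real.mul_rpow hC0 hxn]
    have ex : ‖x‖ ^ t * ‖x‖ ^ (1 - t) = ‖x‖ := by
      rw [← Real.rpow_add_of_nonneg hxn ht0.le ht1'.le]; simp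
    have ey : ‖y‖ ^ t * ‖y‖ ^ (1 - t) = ‖y‖ := by
      rw [← Real.rpow_add_of_nonneg hyn ht0.le ht1'.le]; simp
    calc opNorm B ^ t * ‖x‖ ^ t * ‖y‖ ^ t * (opNorm C ^ (1-t) * ‖x‖ ^ (1-t) * ‖y‖ ^ (1-t))
        = opNorm B ^ t * opNorm C ^ (1-t) * (‖x‖ ^ t * ‖x‖ ^ (1-t)) * (‖y‖ ^ t * ‖y‖ ^ (1-t)) := by
          ring
      _ = opNorm B ^ t * opNorm C ^ (1 - t) * ‖x‖ * ‖y‖ := by rw [ex, ey]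
  exact step1.trans (step2.trans step4)

lemma wgs_nonneg {n : ℕ} (α : ℝ) (A : Matrix (Fin n) (Fin n) ℝ) (hA : ∀ i j, 0 ≤ A i j) :
    ∀ i j, 0 ≤ wgs α A i j := fun i j =>
  mul_nonneg (Real.rpow_nonneg (hA i j) _) (Real.rpow_nonneg (hA j i) _)

lemma wgs_symm {n : ℕ} (α : ℝ) (A : Matrix (Fin n) (Fin n) ℝ) :
    wgs (1 - α) A = (wgs α A)ᵀ := by
  ext i j
  simp only [wgs, Matrix.of_apply, Matrix.transpose_apply, sub_sub_cancel]
  ring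

lemma opNorm_wgs_symm {n : ℕ} (α : ℝ) (A : Matrix (Fin n) (Fin n) ℝ) :
    opNorm (wgs (1 - α) A) = opNorm (wgs α A) := by
  rw [wgs_symm, opNorm_transpose]

lemma wgs_combo {n : ℕ} (A : Matrix (Fin n) (Fin n) ℝ) (hA : ∀ i j, 0 ≤ A i j)
    {β γ t : ℝ} (hβ0 : 0 ≤ β) (hβ1 : β ≤ 1) (hγ0 : 0 ≤ γ) (hγ1 : γ ≤ 1)
    (ht0 : 0 ≤ t) (ht1 : t ≤ 1) :
    wgs (t * β + (1 - t) * γ) A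
      = Matrix.of fun i j => (wgs β A i j) ^ t * (wgs γ A i j) ^ (1 - t) := by
  ext i j
  simp only [wgs, Matrix.of_apply]
  set a := A i j with ha
  set b := A j i with hb
  have ha0 : 0 ≤ a := hA i j
  have hb0 : 0 ≤ b := hA j i
  have ht1' : 0 ≤ 1 - t := by linarith
  rw [Real.mul_rpow (Real.rpow_nonneg ha0 _) (Real.rpow_nonneg hb0 _),
    Real.mul_rpow (Real.rpow_nonneg ha0 _) (Real.rpow_nonneg hb0 _),
    ← Real.rpow_mul ha0, ← Real.rpow_mul hb0, ← Real.rpow_mul ha0, ← Real.rpow_mul hb0]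
  have goal : a ^ (t * β + (1 - t) * γ) * b ^ (1 - (t * β + (1 - t) * γ))
      = (a ^ (β * t) * a ^ (γ * (1 - t))) * (b ^ ((1 - β) * t) * b ^ ((1 - γ) * (1 - t))) := by
    rw [← Real.rpow_add_of_nonneg ha0 (mul_nonneg hβ0 ht0) (mul_nonneg hγ0 ht1'),
      ← Real.rpow_add_of_nonneg hb0 (mul_nonneg (by linarith) ht0)
        (mul_nonneg (by linarith) ht1')]
    have e1 : t * β + (1 - t) * γ = β * t + γ * (1 - t) := by ring
    have e2 : 1 - (t * β + (1 - t) * γ) = (1 - β) * t + (1 - γ) * (1 - t) := by ring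
    rw [e2, e1]
  calc a ^ (t * β + (1 - t) * γ) * b ^ (1 - (t * β + (1 - t) * γ))
      = (a ^ (β * t) * a ^ (γ * (1 - t))) * (b ^ ((1 - β) * t) * b ^ ((1 - γ) * (1 - t))) := goal
    _ = a ^ (β * t) * b ^ ((1 - β) * t) * (a ^ (γ * (1 - t)) * b ^ ((1 - γ) * (1 - t))) := by ring

/-- Log-convexity style bound specialised to `wgs`. -/
lemma wgs_interp {n : ℕ} (A : Matrix (Fin n) (Fin n) ℝ) (hA : ∀ i j, 0 ≤ A i j)
    {β γ t : ℝ} (hβ0 : 0 ≤ β) (hβ1 : β ≤ 1) (hγ0 : 0 ≤ γ) (hγ1 : γ ≤ 1)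
    (ht0 : 0 < t) (ht1 : t < 1) :
    opNorm (wgs (t * β + (1 - t) * γ) A)
      ≤ opNorm (wgs β A) ^ t * opNorm (wgs γ A) ^ (1 - t) := by
  rw [wgs_combo A hA hβ0 hβ1 hγ0 hγ1 ht0.le ht1.le]
  exact core_lemma _ _ (wgs_nonneg β A hA) (wgs_nonneg γ A hA) ht0 ht1

lemma rpow_interp_self {x t : ℝ} (hx : 0 ≤ x) (ht0 : 0 ≤ t) (ht1 : t ≤ 1) :
    x ^ t * x ^ (1 - t) = x := by
  rw [← Real.rpow_add_of_nonneg hx ht0 (by linarith)]; simp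

/-- `α ↦ ‖S_α(A)‖` is decreasing on `[0, 1/2]` and increasing on `[1/2, 1]`;
in particular `‖S_α(A)‖ ≥ ‖S_{1/2}(A)‖` for all `α ∈ [0,1]`. -/
theorem opNorm_wgs_monotonicity {n : ℕ} (A : Matrix (Fin n) (Fin n) ℝ)
    (hA : ∀ i j, 0 ≤ A i j) :
    (∀ a b : ℝ, 0 ≤ a → a ≤ b → b ≤ 1 / 2 → opNorm (wgs b A) ≤ opNorm (wgs a A)) ∧
    (∀ a b : ℝ, 1 / 2 ≤ a → a ≤ b → b ≤ 1 → opNorm (wgs a A) ≤ opNorm (wgs b A)) ∧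
    (∀ α : ℝ, 0 ≤ α → α ≤ 1 → opNorm (wgs (1 / 2) A) ≤ opNorm (wgs α A)) := by
  have dec : ∀ a b : ℝ, 0 ≤ a → a ≤ b → b ≤ 1 / 2 →
      opNorm (wgs b A) ≤ opNorm (wgs a A) := by
    intro a b ha0 hab hb
    rcases eq_or_lt_of_le hab with rfl | hab'
    · exact le_refl _
    have ha2 : a < 1 / 2 := lt_of_lt_of_le hab' hb
    set t : ℝ := (1 - a - b) / (1 - 2 * a) with htd
    have hden : 0 < 1 - 2 * a := by linarith
    have ht0 : 0 < t := div_pos (by linarith) hden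
    have ht1 : t < 1 := by
      rw [htd, div_lt_one hden]; linarith
    have hcombo : t * a + (1 - t) * (1 - a) = b := by
      rw [htd, div_mul_eq_mul_div, one_sub_div hden.ne', div_mul_eq_mul_div, ← add_div,
        div_eq_iff hden.ne']; ring
    have key := wgs_interp A hA ha0 (by linarith) (by linarith : (0:ℝ) ≤ 1 - a)
      (by linarith : (1:ℝ) - a ≤ 1) ht0 ht1
    rw [hcombo, opNorm_wgs_symm] at key
    calc opNorm (wgs b A) ≤ opNorm (wgs a A) ^ t * opNorm (wgs a A) ^ (1 - t) := key
      _ = opNorm (wgs a A) := rpow_interp_self (norm_nonneg _) ht0.le ht1.le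
  refine ⟨dec, ?_, ?_⟩
  · intro a b ha hab hb
    have h1 : opNorm (wgs (1 - a) A) = opNorm (wgs a A) := opNorm_wgs_symm a A
    have h2 : opNorm (wgs (1 - b) A) = opNorm (wgs b A) := opNorm_wgs_symm b A
    have := dec (1 - b) (1 - a) (by linarith) (by linarith) (by linarith)
    rw [h1, h2] at this
    exact this
  · intro α hα0 hα1
    rcases eq_or_ne α (1/2) with rfl | hne
    · exact le_refl _
    have ht0 : (0:ℝ) < 1/2 := by norm_num
    have ht1 : (1:ℝ)/2 < 1 := by norm_num
    have key := wgs_interp A hA hα0 hα1 (by linarith : (0:ℝ) ≤ 1 - α)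
      (by linarith : (1:ℝ) - α ≤ 1) ht0 ht1
    have hcombo : (1:ℝ)/2 * α + (1 - 1/2) * (1 - α) = 1/2 := by ring
    rw [hcombo, opNorm_wgs_symm] at key
    calc opNorm (wgs (1/2) A)
        ≤ opNorm (wgs α A) ^ ((1:ℝ)/2) * opNorm (wgs α A) ^ (1 - (1:ℝ)/2) := key
      _ = opNorm (wgs α A) := rpow_interp_self (norm_nonneg _) (by norm_num) (by norm_num)
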